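/- Let G be a connected graph with Perron eigenvector X for ρ(G), and let u, v be vertices with x_u ≥ x_v. Let G' be obtained from G by deleting all edges vw with w ∈ N(v)\N(u), w ≠ u, and adding edges uw for these w, assuming this set is nonempty. Then ρ(G') > ρ(G). -/

import Mathlib

open Classical in
/-- Adjacency matrix of a simple graph over ℝ. -/
noncomputable def adjMat {V : Type*} [Fintype V] (G : SimpleGraph V) : Matrix V V ℝ :=
  Matrix.of fun i j => if G.Adj i j then (1 : ℝ) else 0

/-- Spectral radius: largest adjacency eigenvalue. -/
noncomputable def specRad {V : Type*} [Fintype V] (G : SimpleGraph V) : ℝ :=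
  sSup {t : ℝ | ∃ x : V → ℝ, x ≠ 0 ∧ (adjMat G).mulVec x = t • x}

/-- `G` contains two edge-disjoint cycles. -/
def HasTwoEdgeDisjointCycles {V : Type*} (G : SimpleGraph V) : Prop :=
  ∃ (u v : V) (c₁ : G.Walk u u) (c₂ : G.Walk v v),
    c₁.IsCycle ∧ c₂.IsCycle ∧ ∀ e ∈ c₁.edges, e ∉ c₂.edges

/-- `G` contains two distinct cycles (as subgraphs) of the same length. -/
def HasTwoCyclesSameLength {V : Type*} [DecidableEq V] (G : SimpleGraph V) : Prop :=
  ∃ (u v : V) (c₁ : G.Walk u u) (c₂ : G.Walk v v),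
    c₁.IsCycle ∧ c₂.IsCycle ∧ c₁.length = c₂.length ∧
      c₁.edges.toFinset ≠ c₂.edges.toFinset

/-- The edge set of a triangle given by a triple of vertices. -/
def triEdges {V : Type*} (t : V × V × V) : Set (Sym2 V) :=
  {s(t.1, t.2.1), s(t.2.1, t.2.2), s(t.1, t.2.2)}

/-- `G` contains `k` pairwise edge-disjoint triangles. -/
def HasEdgeDisjointTriangles {V : Type*} (G : SimpleGraph V) (k : ℕ) : Prop :=
  ∃ T : Fin k → V × V × V,
    (∀ i, G.Adj (T i).1 (T i).2.1 ∧ G.Adj (T i).2.1 (T i).2.2 ∧ G.Adj (T i).1 (T i).2.2) ∧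
    ∀ i j, i ≠ j → Disjoint (triEdges (T i)) (triEdges (T j))

/-- The star `K_{1,n-1}` (center `0`) plus an edge between the leaves `1` and `2`. -/
def starPlus (n : ℕ) : SimpleGraph (Fin n) :=
  SimpleGraph.fromRel (fun x y => x.val = 0 ∨ (x.val < 3 ∧ y.val < 3))

/-- `K₄ • K_{1,n-4}`: `K₄` on `{0,1,2,3}` with `0` joined to everything. -/
def K4Star (n : ℕ) : SimpleGraph (Fin n) :=
  SimpleGraph.fromRel (fun x y => x.val = 0 ∨ (x.val < 4 ∧ y.val < 4))

/-- `K_{3,3} • K_{1,n-6}`: `K_{3,3}` with parts `{0,1,2}`, `{3,4,5}`, and the vertex `0`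
identified with the center of a star with leaves `6,…,n-1`. -/
def K33Star (n : ℕ) : SimpleGraph (Fin n) :=
  SimpleGraph.fromRel (fun x y =>
    (x.val < 3 ∧ 3 ≤ y.val ∧ y.val < 6) ∨ (x.val = 0 ∧ 6 ≤ y.val))

/-- `K_{⌈n/2⌉,⌊n/2⌋}` with a star `K_{1,k-1}` (center `0`, leaves `1,…,k-1`) embedded
in the part `{0,…,⌊n/2⌋-1}` of size `⌊n/2⌋`. -/
def bipStar (n k : ℕ) : SimpleGraph (Fin n) :=
  SimpleGraph.fromRel (fun x y =>
    (x.val < n / 2 ∧ n / 2 ≤ y.val) ∨ (x.val = 0 ∧ 0 < y.val ∧ y.val < k))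

/-- `K_{⌈n/2⌉,⌊n/2⌋}` with a triangle `C₃` on `{0,1,2}` embedded in the part of size `⌊n/2⌋`. -/
def bipTri (n : ℕ) : SimpleGraph (Fin n) :=
  SimpleGraph.fromRel (fun x y =>
    (x.val < n / 2 ∧ n / 2 ≤ y.val) ∨ (x.val < 3 ∧ y.val < 3))

/-- `v` is a cut vertex of `G`. -/
def IsCutVertex {V : Type*} (G : SimpleGraph V) (v : V) : Prop :=
  ∃ a b : ({v}ᶜ : Set V), G.Reachable ↑a ↑b ∧ ¬ (G.induce ({v}ᶜ : Set V)).Reachable a b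


open Classical
open scoped RealInnerProductSpace

section AuxSpectral

noncomputable def matCLM {V : Type*} [Fintype V] (A : Matrix V V ℝ) :
    EuclideanSpace ℝ V →L[ℝ] EuclideanSpace ℝ V :=
  LinearMap.toContinuousLinearMap (Matrix.toEuclideanLin A)

lemma matCLM_apply {V : Type*} [Fintype V] (A : Matrix V V ℝ) (x : EuclideanSpace ℝ V) :
    matCLM A x = (WithLp.equiv 2 (V → ℝ)).symm (A.mulVec ((WithLp.equiv 2 (V → ℝ)) x)) := by
  simp [matCLM, Matrix.toEuclideanLin_apply]

lemma matCLM_selfAdjoint {V : Type*} [Fintype V] {A : Matrix V V ℝ} (hA : A.IsHermitian) :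
    IsSelfAdjoint (matCLM A) := by
  rw [ContinuousLinearMap.isSelfAdjoint_iff_isSymmetric]
  have := Matrix.isHermitian_iff_isSymmetric.mp hA
  simpa [matCLM] using this

lemma reApply_eq {V : Type*} [Fintype V] (T : EuclideanSpace ℝ V →L[ℝ] EuclideanSpace ℝ V)
    (x : EuclideanSpace ℝ V) : T.reApplyInnerSelf x = ⟪T x, x⟫ := by
  simp [ContinuousLinearMap.reApplyInnerSelf]

lemma rayleigh_le_norm {V : Type*} [Fintype V] (T : EuclideanSpace ℝ V →L[ℝ] EuclideanSpace ℝ V)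
    (x : EuclideanSpace ℝ V) (hx : x ≠ 0) : T.rayleighQuotient x ≤ ‖T‖ := by
  have hx1 : (0:ℝ) < ‖x‖ := norm_pos_iff.mpr hx
  have hx2 : (0:ℝ) < ‖x‖ ^ 2 := by positivity
  rw [ContinuousLinearMap.rayleighQuotient, div_le_iff₀ hx2, reApply_eq]
  calc ⟪T x, x⟫ ≤ ‖T x‖ * ‖x‖ := real_inner_le_norm _ _
    _ ≤ (‖T‖ * ‖x‖) * ‖x‖ := by
        have := T.le_opNorm x
        nlinarith [norm_nonneg x, norm_nonneg (T x)]
    _ = ‖T‖ * ‖x‖ ^ 2 := by ring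

lemma rayleigh_bddAbove {V : Type*} [Fintype V] (T : EuclideanSpace ℝ V →L[ℝ] EuclideanSpace ℝ V) :
    BddAbove (Set.range fun x : {x : EuclideanSpace ℝ V // x ≠ 0} => T.rayleighQuotient x) := by
  refine ⟨‖T‖, ?_⟩
  rintro _ ⟨x, rfl⟩
  exact rayleigh_le_norm T x x.2

lemma eigen_equiv {V : Type*} [Fintype V] (A : Matrix V V ℝ) (t : ℝ) :
    (∃ x : V → ℝ, x ≠ 0 ∧ A.mulVec x = t • x) ↔
      ∃ y : EuclideanSpace ℝ V, y ≠ 0 ∧ matCLM A y = t • y := by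
  constructor
  · rintro ⟨x, hx0, hxe⟩
    refine ⟨(WithLp.equiv 2 (V → ℝ)).symm x, ?_, ?_⟩
    · intro h
      apply hx0
      have := congrArg (WithLp.equiv 2 (V → ℝ)) h
      simpa using this
    · rw [matCLM_apply]
      simp [hxe]
  · rintro ⟨y, hy0, hye⟩
    refine ⟨(WithLp.equiv 2 (V → ℝ)) y, ?_, ?_⟩
    · intro h
      apply hy0
      have := congrArg (WithLp.equiv 2 (V → ℝ)).symm h
      simpa using this
    · rw [matCLM_apply] at hye
      have := congrArg (WithLp.equiv 2 (V → ℝ)) hye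
      simpa using this

lemma rayleigh_of_eigen {V : Type*} [Fintype V] {A : Matrix V V ℝ} {t : ℝ}
    {y : EuclideanSpace ℝ V} (hy0 : y ≠ 0) (hye : matCLM A y = t • y) :
    (matCLM A).rayleighQuotient y = t := by
  have hy1 : (0:ℝ) < ‖y‖ := norm_pos_iff.mpr hy0
  rw [ContinuousLinearMap.rayleighQuotient, reApply_eq, hye, real_inner_smul_left,
    real_inner_self_eq_norm_sq]
  field_simp

lemma exists_eigen_lamSup {V : Type*} [Fintype V] [Nonempty V] {A : Matrix V V ℝ}
    (hA : A.IsHermitian) :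
    ∃ y : EuclideanSpace ℝ V, y ≠ 0 ∧
      matCLM A y = (⨆ x : {x : EuclideanSpace ℝ V // x ≠ 0}, (matCLM A).rayleighQuotient x) • y := by
  haveI : Nontrivial (EuclideanSpace ℝ V) := by
    refine ⟨(WithLp.equiv 2 (V → ℝ)).symm 0, (WithLp.equiv 2 (V → ℝ)).symm 1, fun h => ?_⟩
    have := congrArg (WithLp.equiv 2 (V → ℝ)) h
    simp only [Equiv.apply_symm_apply] at this
    exact one_ne_zero (congrFun this (Classical.arbitrary V)).symm
  have hsym : (Matrix.toEuclideanLin A).IsSymmetric := Matrix.isHermitian_iff_isSymmetric.mp hA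
  have hev := hsym.hasEigenvalue_iSup_of_finiteDimensional
  obtain ⟨y, hy⟩ := hev.exists_hasEigenvector
  refine ⟨y, hy.right, ?_⟩
  have happ := hy.apply_eq_smul
  have hco : (matCLM A : EuclideanSpace ℝ V →ₗ[ℝ] EuclideanSpace ℝ V) = Matrix.toEuclideanLin A :=
    LinearMap.coe_toContinuousLinearMap _
  have h2 : matCLM A y = (⨆ x : { x : EuclideanSpace ℝ V // x ≠ 0 },
      RCLike.re (inner ℝ ((Matrix.toEuclideanLin A) x) (x : EuclideanSpace ℝ V) : ℝ) /
        ‖(x : EuclideanSpace ℝ V)‖ ^ 2) • y := by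
    rw [← hco] at happ ⊢
    exact happ
  convert h2 using 3
  rfl

lemma adjMat_herm {V : Type*} [Fintype V] (G : SimpleGraph V) : (adjMat G).IsHermitian := by
  unfold Matrix.IsHermitian
  apply Matrix.ext
  intro i j
  simp [Matrix.conjTranspose_apply, adjMat, G.adj_comm]

lemma specRad_eq {V : Type*} [Fintype V] [Nonempty V] (G : SimpleGraph V) :
    specRad G = ⨆ x : {x : EuclideanSpace ℝ V // x ≠ 0}, (matCLM (adjMat G)).rayleighQuotient x := by
  set lam := ⨆ x : {x : EuclideanSpace ℝ V // x ≠ 0}, (matCLM (adjMat G)).rayleighQuotient x with hlam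
  have hmem : lam ∈ {t : ℝ | ∃ x : V → ℝ, x ≠ 0 ∧ (adjMat G).mulVec x = t • x} := by
    rw [Set.mem_setOf_eq, eigen_equiv]
    exact exists_eigen_lamSup (adjMat_herm G)
  have hub : ∀ t ∈ {t : ℝ | ∃ x : V → ℝ, x ≠ 0 ∧ (adjMat G).mulVec x = t • x}, t ≤ lam := by
    rintro t ht
    rw [Set.mem_setOf_eq, eigen_equiv] at ht
    obtain ⟨y, hy0, hye⟩ := ht
    rw [← rayleigh_of_eigen hy0 hye]
    exact le_ciSup (rayleigh_bddAbove _) (⟨y, hy0⟩ : {x : EuclideanSpace ℝ V // x ≠ 0})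
  exact le_antisymm (csSup_le ⟨lam, hmem⟩ hub) (le_csSup ⟨lam, hub⟩ hmem)

lemma rayleigh_le_specRad {V : Type*} [Fintype V] [Nonempty V] (G : SimpleGraph V)
    (y : EuclideanSpace ℝ V) (hy : y ≠ 0) :
    (matCLM (adjMat G)).rayleighQuotient y ≤ specRad G := by
  rw [specRad_eq]
  exact le_ciSup (rayleigh_bddAbove _) (⟨y, hy⟩ : {x : EuclideanSpace ℝ V // x ≠ 0})

end AuxSpectral

set_option maxHeartbeats 1000000 in
theorem stmt9 {V : Type*} [Fintype V] (G : SimpleGraph V) (hG : G.Connected)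
    (X : V → ℝ) (hXpos : ∀ w, 0 < X w) (hX : (adjMat G).mulVec X = specRad G • X)
    (u v : V) (huv : X v ≤ X u)
    (S : Set V) (hS : S = {w | G.Adj v w ∧ ¬ G.Adj u w ∧ w ≠ u}) (hSne : S.Nonempty)
    (G' : SimpleGraph V)
    (hG' : ∀ a b, G'.Adj a b ↔
      ((G.Adj a b ∧ ¬(a = v ∧ b ∈ S) ∧ ¬(b = v ∧ a ∈ S)) ∨
        (a = u ∧ b ∈ S) ∨ (b = u ∧ a ∈ S))) :
    specRad G < specRad G' := by
  classical
  have hSadjv : ∀ w ∈ S, G.Adj v w := fun w hw => by rw [hS] at hw; exact hw.1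
  have hSnadju : ∀ w ∈ S, ¬ G.Adj u w := fun w hw => by rw [hS] at hw; exact hw.2.1
  have hSneu : ∀ w ∈ S, w ≠ u := fun w hw => by rw [hS] at hw; exact hw.2.2
  have huv_ne : u ≠ v := by
    rintro rfl
    obtain ⟨w, hw⟩ := hSne
    exact hSnadju w hw (hSadjv w hw)
  have hUS : u ∉ S := fun h => hSneu u h rfl
  have hVS : v ∉ S := fun h => (hSadjv v h).ne rfl
  have key : ∀ a b, adjMat G' a b = adjMat G a b
      + ((if a = u ∧ b ∈ S then (1:ℝ) else 0) + (if b = u ∧ a ∈ S then (1:ℝ) else 0))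
      - ((if a = v ∧ b ∈ S then (1:ℝ) else 0) + (if b = v ∧ a ∈ S then (1:ℝ) else 0)) := by
    intro a b
    simp only [adjMat, Matrix.of_apply, hG' a b]
    by_cases h1 : a = u ∧ b ∈ S
    · have c1 : ¬ G.Adj a b := h1.1 ▸ hSnadju b h1.2
      have c2 : ¬ (b = u ∧ a ∈ S) := fun h => hSneu b h1.2 h.1
      have c3 : ¬ (a = v ∧ b ∈ S) := fun h => huv_ne (h1.1.symm.trans h.1)
      have c4 : ¬ (b = v ∧ a ∈ S) := fun h => hUS (h1.1 ▸ h.2)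
      rw [if_pos (Or.inr (Or.inl h1)), if_neg c1, if_pos h1, if_neg c2, if_neg c3, if_neg c4]
      ring
    · by_cases h2 : b = u ∧ a ∈ S
      · have c1 : ¬ G.Adj a b := fun h => hSnadju a h2.2 (h2.1 ▸ h.symm)
        have c3 : ¬ (a = v ∧ b ∈ S) := fun h => hSneu b h.2 h2.1
        have c4 : ¬ (b = v ∧ a ∈ S) := fun h => huv_ne (h2.1.symm.trans h.1)
        rw [if_pos (Or.inr (Or.inr h2)), if_neg c1, if_neg h1, if_pos h2, if_neg c3, if_neg c4]
        ring
      · by_cases h3 : a = v ∧ b ∈ S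
        · have hadj : G.Adj a b := h3.1 ▸ hSadjv b h3.2
          have c4 : ¬ (b = v ∧ a ∈ S) := fun h => hVS (h3.1 ▸ h.2)
          have hbig : ¬ ((G.Adj a b ∧ ¬(a = v ∧ b ∈ S) ∧ ¬(b = v ∧ a ∈ S)) ∨
              (a = u ∧ b ∈ S) ∨ (b = u ∧ a ∈ S)) := by
            rintro (⟨_, hne, _⟩ | hb | hb)
            · exact hne h3
            · exact h1 hb
            · exact h2 hb
          rw [if_neg hbig, if_pos hadj, if_neg h1, if_neg h2, if_pos h3, if_neg c4]
          ring
        · by_cases h4 : b = v ∧ a ∈ S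
          · have hadj : G.Adj a b := h4.1 ▸ (hSadjv a h4.2).symm
            have hbig : ¬ ((G.Adj a b ∧ ¬(a = v ∧ b ∈ S) ∧ ¬(b = v ∧ a ∈ S)) ∨
                (a = u ∧ b ∈ S) ∨ (b = u ∧ a ∈ S)) := by
              rintro (⟨_, _, hne⟩ | hb | hb)
              · exact hne h4
              · exact h1 hb
              · exact h2 hb
            rw [if_neg hbig, if_pos hadj, if_neg h1, if_neg h2, if_neg h3, if_pos h4]
            ring
          · have hiff : ((G.Adj a b ∧ ¬(a = v ∧ b ∈ S) ∧ ¬(b = v ∧ a ∈ S)) ∨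
                (a = u ∧ b ∈ S) ∨ (b = u ∧ a ∈ S)) ↔ G.Adj a b := by
              constructor
              · rintro (⟨h, _, _⟩ | hb | hb)
                · exact h
                · exact absurd hb h1
                · exact absurd hb h2
              · exact fun h => Or.inl ⟨h, h3, h4⟩
            rw [if_congr hiff rfl rfl, if_neg h1, if_neg h2, if_neg h3, if_neg h4]
            ring
  set Fs : Finset V := Finset.univ.filter (· ∈ S) with hFs
  set Ssum : ℝ := ∑ w ∈ Fs, X w with hSsum
  have hmv : ∀ a, (adjMat G').mulVec X a = (adjMat G).mulVec X a
      + ((if a = u then Ssum else 0) + (if a ∈ S then X u else 0))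
      - ((if a = v then Ssum else 0) + (if a ∈ S then X v else 0)) := by
    intro a
    simp only [Matrix.mulVec, dotProduct]
    calc ∑ b, adjMat G' a b * X b
        = ∑ b, (adjMat G a b * X b
          + ((if a = u ∧ b ∈ S then X b else 0) + (if b = u ∧ a ∈ S then X b else 0))
          - ((if a = v ∧ b ∈ S then X b else 0) + (if b = v ∧ a ∈ S then X b else 0))) := by
          refine Finset.sum_congr rfl fun b _ => ?_
          rw [key a b]
          split_ifs <;> ring
      _ = _ := by
          have p1 : ∑ b, (if a = u ∧ b ∈ S then X b else 0) = (if a = u then Ssum else 0) := by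
            by_cases ha : a = u
            · rw [if_pos ha]
              simp only [ha, true_and]
              rw [← Finset.sum_filter]
            · simp [ha]
          have p2 : ∑ b, (if b = u ∧ a ∈ S then X b else 0) = (if a ∈ S then X u else 0) := by
            by_cases ha : a ∈ S
            · simp [ha]
            · simp [ha]
          have p3 : ∑ b, (if a = v ∧ b ∈ S then X b else 0) = (if a = v then Ssum else 0) := by
            by_cases ha : a = v
            · rw [if_pos ha]
              simp only [ha, true_and]
              rw [← Finset.sum_filter]
            · simp [ha]
          have p4 : ∑ b, (if b = v ∧ a ∈ S then X b else 0) = (if a ∈ S then X v else 0) := by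
            by_cases ha : a ∈ S
            · simp [ha]
            · simp [ha]
          rw [Finset.sum_sub_distrib, Finset.sum_add_distrib, Finset.sum_add_distrib,
            Finset.sum_add_distrib, p1, p2, p3, p4]
  have hQ : ∑ a, (adjMat G').mulVec X a * X a
      = (∑ a, (adjMat G).mulVec X a * X a) + 2 * (X u - X v) * Ssum := by
    calc ∑ a, (adjMat G').mulVec X a * X a
        = ∑ a, ((adjMat G).mulVec X a * X a
          + ((if a = u then Ssum * X a else 0) + (if a ∈ S then X u * X a else 0))
          - ((if a = v then Ssum * X a else 0) + (if a ∈ S then X v * X a else 0))) := by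
          refine Finset.sum_congr rfl fun a _ => ?_
          rw [hmv a]
          split_ifs <;> ring
      _ = _ := by
          have e1 : ∑ a, (if a = u then Ssum * X a else 0) = Ssum * X u := by simp
          have e2 : ∑ a, (if a ∈ S then X u * X a else 0) = X u * Ssum := by
            rw [← Finset.sum_filter, hSsum, Finset.mul_sum]
          have e3 : ∑ a, (if a = v then Ssum * X a else 0) = Ssum * X v := by simp
          have e4 : ∑ a, (if a ∈ S then X v * X a else 0) = X v * Ssum := by
            rw [← Finset.sum_filter, hSsum, Finset.mul_sum]
          rw [Finset.sum_sub_distrib, Finset.sum_add_distrib, Finset.sum_add_distrib,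
            Finset.sum_add_distrib, e1, e2, e3, e4]
          ring
  -- analytic part
  haveI : Nonempty V := hG.nonempty
  have hX0 : X ≠ 0 := fun h => (hXpos (Classical.arbitrary V)).ne' (congrFun h _)
  set Y : EuclideanSpace ℝ V := (WithLp.equiv 2 (V → ℝ)).symm X with hY
  have hYX : (WithLp.equiv 2 (V → ℝ)) Y = X := by simp [hY]
  have hY0 : Y ≠ 0 := by
    intro h
    apply hX0
    have := congrArg (WithLp.equiv 2 (V → ℝ)) h
    simpa [hYX] using this
  have hYpos : (0:ℝ) < ‖Y‖ := norm_pos_iff.mpr hY0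
  have hinner : ∀ M : Matrix V V ℝ, (⟪matCLM M Y, Y⟫ : ℝ) = ∑ a, M.mulVec X a * X a := by
    intro M
    rw [matCLM_apply, hYX, PiLp.inner_apply]
    refine Finset.sum_congr rfl fun a _ => ?_
    simp [hY, RCLike.inner_apply, mul_comm]
  have hSpos : 0 < Ssum := by
    obtain ⟨w, hw⟩ := hSne
    refine Finset.sum_pos (fun i _ => hXpos i) ⟨w, ?_⟩
    simp [hFs, hw]
  have hAeigY : matCLM (adjMat G) Y = specRad G • Y := by
    rw [matCLM_apply, hYX, hX, hY]
    simp
  have hrayG : (matCLM (adjMat G)).rayleighQuotient Y = specRad G :=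
    rayleigh_of_eigen hY0 hAeigY
  have hinnerG : (⟪matCLM (adjMat G) Y, Y⟫ : ℝ) = specRad G * ‖Y‖ ^ 2 := by
    rw [hAeigY, real_inner_smul_left, real_inner_self_eq_norm_sq]
  have hray' : specRad G ≤ (matCLM (adjMat G')).rayleighQuotient Y := by
    rw [ContinuousLinearMap.rayleighQuotient, reApply_eq, hinner, hQ, ← hinner, hinnerG]
    rw [le_div_iff₀ (by positivity)]
    nlinarith [mul_nonneg (mul_nonneg (by norm_num : (0:ℝ) ≤ 2) (sub_nonneg.mpr huv)) hSpos.le]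
  have hle : specRad G ≤ specRad G' :=
    le_trans hray' (rayleigh_le_specRad G' Y hY0)
  rcases lt_or_eq_of_le hle with hlt | heq
  · exact hlt
  · exfalso
    have hrayY : (matCLM (adjMat G')).rayleighQuotient Y = specRad G' :=
      le_antisymm (rayleigh_le_specRad G' Y hY0) (heq ▸ hray')
    have hmax : IsMaxOn (matCLM (adjMat G')).reApplyInnerSelf (Metric.sphere (0 : EuclideanSpace ℝ V) ‖Y‖) Y := by
      rw [isMaxOn_iff]
      intro z hz
      have hzn : ‖z‖ = ‖Y‖ := by simpa using hz
      have hz0 : z ≠ 0 := by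
        intro h
        rw [h, norm_zero] at hzn
        exact hYpos.ne hzn
      have h1 : (matCLM (adjMat G')).reApplyInnerSelf z
          = (matCLM (adjMat G')).rayleighQuotient z * ‖z‖ ^ 2 := by
        rw [ContinuousLinearMap.rayleighQuotient,
          div_mul_cancel₀ _ (pow_ne_zero 2 (norm_ne_zero_iff.mpr hz0))]
      have h2 : (matCLM (adjMat G')).reApplyInnerSelf Y
          = (matCLM (adjMat G')).rayleighQuotient Y * ‖Y‖ ^ 2 := by
        rw [ContinuousLinearMap.rayleighQuotient,
          div_mul_cancel₀ _ (pow_ne_zero 2 (norm_ne_zero_iff.mpr hY0))]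
      rw [h1, h2, hzn, hrayY]
      have := rayleigh_le_specRad G' z hz0
      nlinarith [sq_nonneg ‖Y‖]
    have hev := (matCLM_selfAdjoint (adjMat_herm G')).hasEigenvector_of_isMaxOn hY0 hmax
    have heig : matCLM (adjMat G') Y = specRad G' • Y := by
      have := hev.apply_eq_smul
      rw [← specRad_eq G'] at this
      exact this
    have hmvX : (adjMat G').mulVec X = specRad G' • X := by
      rw [matCLM_apply, hYX] at heig
      have := congrArg (WithLp.equiv 2 (V → ℝ)) heig
      simpa [hYX, show Y.ofLp = X from hYX] using this
    have hv1 : (adjMat G').mulVec X v = specRad G' * X v := by rw [hmvX]; rfl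
    have hv2 : (adjMat G).mulVec X v = specRad G * X v := by rw [hX]; rfl
    have hv3 := hmv v
    have e1 : (if v = u then Ssum else (0:ℝ)) = 0 := if_neg (fun h => huv_ne h.symm)
    have e2 : (if v ∈ S then X u else (0:ℝ)) = 0 := if_neg hVS
    have e3 : (if v ∈ S then X v else (0:ℝ)) = 0 := if_neg hVS
    have e4 : (if v = v then Ssum else (0:ℝ)) = Ssum := if_pos rfl
    rw [hv1, hv2, e1, e2, e3, e4, ← heq] at hv3
    linarith
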